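/- arXiv:1904.03251 — 2 statements merged into one kernel-verified Lean document; each statement's English description precedes it below -/
import Mathlib

section
/- For positive integers m ≤ t and 0 ≤ δ < n, when m = t the sum ∑_{i=0}^{m-1} C(m-i+δ, δ) · C(i+n-δ-1, n-δ-1) equals C(m+n, n) − C(m+n-δ-1, n-δ-1). -/
lemma key_choose_conv (b : ℕ) : ∀ a M : ℕ,
    ∑ i ∈ Finset.range (M + 1), (M - i + a).choose a * (i + b).choose b
      = (M + a + b + 1).choose (a + b + 1) := by
  induction b with
  | zero =>
    intro a M
    simp only [Nat.add_zero, Nat.choose_zero_right, Nat.mul_one]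
    calc ∑ i ∈ Finset.range (M + 1), (M - i + a).choose a
        = ∑ i ∈ Finset.range (M + 1), ((M + 1 - 1 - i) + a).choose a := rfl
      _ = ∑ i ∈ Finset.range (M + 1), (i + a).choose a :=
          Finset.sum_range_reflect (fun i => (i + a).choose a) (M + 1)
      _ = (M + a + 1).choose (a + 1) := Nat.sum_range_add_choose M a
  | succ b ih =>
    intro a M
    have step : ∀ i : ℕ, (i + (b + 1)).choose (b + 1)
        = ∑ k ∈ Finset.range (i + 1), (k + b).choose b := by
      intro i
      rw [Nat.sum_range_add_choose i b, show i + (b + 1) = i + b + 1 by ring]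
    calc ∑ i ∈ Finset.range (M + 1), (M - i + a).choose a * (i + (b + 1)).choose (b + 1)
        = ∑ i ∈ Finset.Ico 0 (M + 1), ∑ k ∈ Finset.Ico 0 (i + 1),
            (M - i + a).choose a * (k + b).choose b := by
          rw [← Finset.range_eq_Ico]
          refine Finset.sum_congr rfl fun i _ => ?_
          rw [step i, Finset.mul_sum, Finset.range_eq_Ico]
      _ = ∑ k ∈ Finset.Ico 0 (M + 1), ∑ i ∈ Finset.Ico k (M + 1),
            (M - i + a).choose a * (k + b).choose b :=
          (Finset.sum_Ico_Ico_comm 0 (M + 1)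
            (fun k i => (M - i + a).choose a * (k + b).choose b)).symm
      _ = ∑ k ∈ Finset.range (M + 1), (M - k + (a + 1)).choose (a + 1) * (k + b).choose b := by
          rw [← Finset.range_eq_Ico]
          refine Finset.sum_congr rfl fun k hk => ?_
          rw [Finset.mem_range] at hk
          rw [← Finset.sum_mul]
          congr 1
          rw [Finset.sum_Ico_eq_sum_range]
          have h2 := Finset.sum_range_reflect (fun t => (t + a).choose a) (M + 1 - k)
          have h3 : ∀ t ∈ Finset.range (M + 1 - k), (M - (k + t) + a).choose a
              = (M - k - t + a).choose a := by
            intro t _; congr 2; omega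
          rw [Finset.sum_congr rfl h3]
          have h4 : M + 1 - k = (M - k) + 1 := by omega
          rw [h4] at h2 ⊢
          simp only [show ∀ t, (M - k) + 1 - 1 - t = M - k - t from fun t => by omega] at h2
          rw [h2, Nat.sum_range_add_choose, Nat.add_assoc]
      _ = (M + a + (b + 1) + 1).choose (a + (b + 1) + 1) := by
          rw [ih (a + 1) M]
          congr 1 <;> ring

theorem stmt3 (n m δ : ℕ) (hm : 1 ≤ m) (hδ : δ < n) :
    (∑ i ∈ Finset.range m,
        (Nat.choose (m - i + δ) δ * Nat.choose (i + n - δ - 1) (n - δ - 1) : ℤ))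
      = Nat.choose (m + n) n - Nat.choose (m + n - δ - 1) (n - δ - 1) := by
  set e := n - δ - 1 with he
  have hn : n = δ + e + 1 := by omega
  have hfull := key_choose_conv e δ m
  have hsplit : ∑ i ∈ Finset.range (m + 1), (m - i + δ).choose δ * (i + e).choose e
      = (∑ i ∈ Finset.range m, (m - i + δ).choose δ * (i + e).choose e)
        + (m - m + δ).choose δ * (m + e).choose e := Finset.sum_range_succ _ _
  have hnat : (∑ i ∈ Finset.range m, (m - i + δ).choose δ * (i + e).choose e)
      + (m + e).choose e = (m + n).choose n := by
    have h1 : (m - m + δ).choose δ = 1 := by simp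
    have h5 : m + δ + e + 1 = m + n := by omega
    have h6 : δ + e + 1 = n := by omega
    rw [hsplit, h1, one_mul, h5, h6] at hfull
    exact hfull
  have hidx : ∀ i, i + n - δ - 1 = i + e := fun i => by omega
  have hmn : m + n - δ - 1 = m + e := by omega
  calc (∑ i ∈ Finset.range m,
        (Nat.choose (m - i + δ) δ * Nat.choose (i + n - δ - 1) (n - δ - 1) : ℤ))
      = ((∑ i ∈ Finset.range m, (m - i + δ).choose δ * (i + e).choose e : ℕ) : ℤ) := by
        push_cast
        exact Finset.sum_congr rfl fun i _ => by rw [hidx i, ← he]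
    _ = ((m + n).choose n : ℤ) - ((m + e).choose e : ℤ) := by
        rw [← hnat]; push_cast; ring
    _ = _ := by rw [hmn]
end

section
/- Let L be a line in P^3 over an algebraically closed field, let p_1, ..., p_s be distinct points on L, and let F be a nonzero homogeneous polynomial of degree t in 4 variables vanishing to order at least m at each p_i. If s ≥ t − m + 2, then F vanishes to order at least m along L. -/
/-- The homogeneous ideal of a point of `ℙ^3` with affine representative `p`:
generated by the linear forms vanishing at `p`. -/
noncomputable def pointIdealP3 (K : Type*) [Field K] (p : Fin 4 → K) : Ideal (MvPolynomial (Fin 4) K) :=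
  Ideal.span {l | l.IsHomogeneous 1 ∧ MvPolynomial.eval p l = 0}

/-- The homogeneous ideal of the line of `ℙ^3` spanned by two (linearly independent)
points `q` and `r`: generated by the linear forms vanishing at both `q` and `r`. -/
noncomputable def lineIdealP3 (K : Type*) [Field K] (q r : Fin 4 → K) : Ideal (MvPolynomial (Fin 4) K) :=
  Ideal.span {l | l.IsHomogeneous 1 ∧ MvPolynomial.eval q l = 0 ∧ MvPolynomial.eval r l = 0}

open MvPolynomial

section Msub
variable {K : Type*} [Field K] {n : ℕ}

/-- Linear substitution of variables by a matrix. -/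
noncomputable def msub (A : Matrix (Fin n) (Fin n) K) :
    MvPolynomial (Fin n) K →ₐ[K] MvPolynomial (Fin n) K :=
  aeval (fun k => ∑ j, C (A k j) * X j)

lemma msub_X (A : Matrix (Fin n) (Fin n) K) (k : Fin n) :
    msub A (X k) = ∑ j, C (A k j) * X j := aeval_X _ _

lemma msub_msub (A B : Matrix (Fin n) (Fin n) K) (f : MvPolynomial (Fin n) K) :
    msub A (msub B f) = msub (B * A) f := by
  have : (msub A).comp (msub B) = msub (B * A) := by
    apply MvPolynomial.algHom_ext
    intro k
    simp only [AlgHom.comp_apply, msub_X, map_sum, map_mul]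
    simp only [msub, aeval_C, aeval_X, algebraMap_eq]
    simp_rw [Finset.mul_sum, ← mul_assoc, ← C_mul]
    rw [Finset.sum_comm]
    congr 1; ext j
    rw [Matrix.mul_apply, map_sum, Finset.sum_mul]
  calc msub A (msub B f) = ((msub A).comp (msub B)) f := rfl
    _ = msub (B * A) f := by rw [this]

lemma msub_one (f : MvPolynomial (Fin n) K) : msub (1 : Matrix (Fin n) (Fin n) K) f = f := by
  have : msub (1 : Matrix (Fin n) (Fin n) K) = AlgHom.id K _ := by
    apply MvPolynomial.algHom_ext
    intro k
    simp [msub_X, Matrix.one_apply, Finset.sum_ite_eq, apply_ite C]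
  rw [this]; rfl

lemma eval_msub (A : Matrix (Fin n) (Fin n) K) (p : Fin n → K) (f : MvPolynomial (Fin n) K) :
    eval p (msub A f) = eval (A.mulVec p) f := by
  have : (eval p).comp (msub A).toRingHom = eval (A.mulVec p) := by
    apply MvPolynomial.ringHom_ext
    · intro c; simp [msub]
    · intro k
      simp [msub_X, Matrix.mulVec, dotProduct]
  calc eval p (msub A f) = ((eval p).comp (msub A).toRingHom) f := rfl
    _ = eval (A.mulVec p) f := by rw [this]

lemma isHomogeneous_msub (A : Matrix (Fin n) (Fin n) K) {f : MvPolynomial (Fin n) K} {t : ℕ}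
    (hf : f.IsHomogeneous t) : (msub A f).IsHomogeneous t := by
  have hX : ∀ k, (msub A (X k)).IsHomogeneous 1 := by
    intro k
    rw [msub_X, ← mem_homogeneousSubmodule]
    apply Submodule.sum_mem
    intro j _
    rw [mem_homogeneousSubmodule]
    simpa using (isHomogeneous_X K (σ := Fin n) j).C_mul (A k j)
  conv_lhs => rw [f.as_sum]
  rw [map_sum, ← mem_homogeneousSubmodule]
  apply Submodule.sum_mem
  intro d hd
  rw [mem_homogeneousSubmodule, monomial_eq, map_mul]
  have hdeg := hf (mem_support_iff.mp hd)
  have : (msub A (d.prod fun k e => X k ^ e)).IsHomogeneous t := by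
    rw [Finsupp.prod_pow, map_prod]
    have := MvPolynomial.IsHomogeneous.prod Finset.univ
      (fun k => msub A (X k ^ d k)) (fun k => d k) ?_
    · convert this using 2
      rw [← hdeg]
      simp [Finsupp.weight_apply, Finsupp.sum_fintype, mul_comm]
    · intro k _
      rw [map_pow]
      simpa using (hX k).pow (d k)
  simpa using (MvPolynomial.isHomogeneous_C _ (coeff d f)).mul this

end Msub

open MvPolynomial

section LinForms
variable {K : Type*} [Field K]

lemma finsupp_weight_one_eq {n : ℕ} (d : Fin n →₀ ℕ)
    (h : (Finsupp.weight (1 : Fin n → ℕ)) d = 1) : ∃ k, d = Finsupp.single k 1 := by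
  have hs : ∑ i, d i = 1 := by
    rw [← h]; simp [Finsupp.weight_apply, Finsupp.sum_fintype, mul_comm]
  obtain ⟨k, hk⟩ : ∃ k, d k ≠ 0 := by
    by_contra h'
    push_neg at h'
    simp [h'] at hs
  refine ⟨k, ?_⟩
  have hdk : d k = 1 := by
    have h1 : d k ≤ ∑ i, d i := Finset.single_le_sum (fun i _ => Nat.zero_le _) (Finset.mem_univ k)
    omega
  ext i
  rcases eq_or_ne i k with rfl | hik
  · simp [hdk]
  · have h3 : d i = 0 := by
      have h2 : ∑ j ∈ ({i, k} : Finset (Fin n)), d j ≤ ∑ j, d j :=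
        Finset.sum_le_sum_of_subset (fun x _ => Finset.mem_univ x)
      rw [Finset.sum_pair hik] at h2
      omega
    simp [h3, Finsupp.single_apply, Ne.symm hik]

lemma homog_one_eq {n : ℕ} (l : MvPolynomial (Fin n) K) (hl : l.IsHomogeneous 1) :
    l = ∑ k, C (coeff (Finsupp.single k 1) l) * X k := by
  apply MvPolynomial.ext
  intro d
  rw [coeff_sum]
  simp_rw [coeff_C_mul, coeff_X']
  by_cases hd : ∃ k, d = Finsupp.single k 1
  · obtain ⟨k, rfl⟩ := hd
    rw [Finset.sum_eq_single k]
    · simp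
    · intro j _ hjk
      rw [if_neg, mul_zero]
      rw [Finsupp.single_left_inj one_ne_zero]
      exact hjk
    · simp
  · rw [hl.coeff_eq_zero, Finset.sum_eq_zero]
    · intro j _
      rw [if_neg, mul_zero]
      intro heq
      exact hd ⟨j, heq.symm⟩
    · intro hdeg
      apply hd
      rw [Finsupp.degree_eq_weight_one] at hdeg
      exact finsupp_weight_one_eq d hdeg

/-- In standard position, the point ideal of `(a,b,0,0)` is contained in the ideal
generated by `b X0 - a X1, X2, X3`. -/
lemma pointIdeal_le (a b : K) (hab : (a, b) ≠ (0, 0)) (c : Fin 4 → K)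
    (hc0 : c 0 = a) (hc1 : c 1 = b) (hc2 : c 2 = 0) (hc3 : c 3 = 0) :
    pointIdealP3 K c ≤
      Ideal.span {C b * X 0 - C a * X 1, X 2, X 3} := by
  rw [pointIdealP3, Ideal.span_le]
  rintro l ⟨hl1, hl2⟩
  set I := Ideal.span ({C b * X 0 - C a * X 1, X 2, X 3} : Set (MvPolynomial (Fin 4) K)) with hI
  have hg1 : (C b * X 0 - C a * X 1 : MvPolynomial (Fin 4) K) ∈ I :=
    Ideal.subset_span (by simp)
  have hg2 : (X 2 : MvPolynomial (Fin 4) K) ∈ I := Ideal.subset_span (by simp)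
  have hg3 : (X 3 : MvPolynomial (Fin 4) K) ∈ I := Ideal.subset_span (by simp)
  set γ : Fin 4 → K := fun k => coeff (Finsupp.single k 1) l with hγ
  have hdec : l = C (γ 0) * X 0 + C (γ 1) * X 1 + C (γ 2) * X 2 + C (γ 3) * X 3 := by
    rw [homog_one_eq l hl1, Fin.sum_univ_four]
  have heval : γ 0 * a + γ 1 * b = 0 := by
    have h4 := hl2
    rw [hdec] at h4
    simpa [hc0, hc1, hc2, hc3] using h4
  have key : ∃ e : K, C (γ 0) * X 0 + C (γ 1) * X 1
      = C e * (C b * X 0 - C a * X 1 : MvPolynomial (Fin 4) K) := by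
    rcases eq_or_ne a 0 with ha | ha
    · have hb : b ≠ 0 := fun hb0 => hab (by simp [ha, hb0])
      refine ⟨γ 0 / b, ?_⟩
      have hγ1 : γ 1 = 0 := by
        have h0 : γ 1 * b = 0 := by rw [ha] at heval; simpa using heval
        exact (mul_eq_zero.mp h0).resolve_right hb
      rw [hγ1, ha, map_zero, zero_mul, add_zero, sub_zero]
      rw [← mul_assoc, ← C_mul, div_mul_cancel₀ _ hb]
    · refine ⟨-(γ 1) / a, ?_⟩
      have h1 : (-(γ 1) / a) * b = γ 0 := by
        field_simp
        linear_combination -heval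
      have h2 : (-(γ 1) / a) * a = -(γ 1) := by field_simp
      rw [mul_sub, ← mul_assoc, ← mul_assoc, ← C_mul, ← C_mul, h1, h2, map_neg, neg_mul,
        sub_neg_eq_add]
  obtain ⟨e, he⟩ := key
  show l ∈ I
  have hsplit : l = C e * (C b * X 0 - C a * X 1) + (C (γ 2) * X 2 + C (γ 3) * X 3) := by
    rw [hdec, ← he]; ring
  rw [hsplit]
  exact add_mem (Ideal.mul_mem_left _ _ hg1)
    (add_mem (Ideal.mul_mem_left _ _ hg2) (Ideal.mul_mem_left _ _ hg3))

end LinForms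
open MvPolynomial

section Esec
variable {K : Type*} [Field K]

/-- `Fin 4 ≃ Fin 2 ⊕ Fin 2`, sending the line variables `X2, X3` to the outer (left) factor. -/
def e4 : Fin 4 ≃ (Fin 2 ⊕ Fin 2) where
  toFun := ![Sum.inr 0, Sum.inr 1, Sum.inl 0, Sum.inl 1]
  invFun := Sum.elim ![2, 3] ![0, 1]
  left_inv := by decide
  right_inv := by decide

/-- The isomorphism `K[X0..X3] ≃ (K[x0,x1])[Y0,Y1]`, `X2 ↦ Y0`, `X3 ↦ Y1`, `X0 ↦ x0`, `X1 ↦ x1`. -/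
noncomputable def EE (K : Type*) [Field K] :
    MvPolynomial (Fin 4) K ≃ₐ[K] MvPolynomial (Fin 2) (MvPolynomial (Fin 2) K) :=
  (renameEquiv K e4).trans (sumAlgEquiv K (Fin 2) (Fin 2))

lemma EE_X0 : EE K (X 0) = C (X 0) := by
  simp only [EE, AlgEquiv.trans_apply, renameEquiv_apply, rename_X]
  rw [show e4 0 = Sum.inr 0 from rfl, sumAlgEquiv_X_inr]
lemma EE_X1 : EE K (X 1) = C (X 1) := by
  simp only [EE, AlgEquiv.trans_apply, renameEquiv_apply, rename_X]
  rw [show e4 1 = Sum.inr 1 from rfl, sumAlgEquiv_X_inr]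
lemma EE_X2 : EE K (X 2) = X 0 := by
  simp only [EE, AlgEquiv.trans_apply, renameEquiv_apply, rename_X]
  rw [show e4 2 = Sum.inl 0 from rfl, sumAlgEquiv_X_inl]
lemma EE_X3 : EE K (X 3) = X 1 := by
  simp only [EE, AlgEquiv.trans_apply, renameEquiv_apply, rename_X]
  rw [show e4 3 = Sum.inl 1 from rfl, sumAlgEquiv_X_inl]
lemma EE_C (c : K) : EE K (C c) = C (C c) := by
  simp [EE, renameEquiv_apply, sumAlgEquiv_C_inl, rename_C, sumToIter_C]

lemma EE_monomial (nn : Fin 4 →₀ ℕ) (c : K) :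
    EE K (monomial nn c) =
      monomial (Finsupp.single 0 (nn 2) + Finsupp.single 1 (nn 3))
        (monomial (Finsupp.single 0 (nn 0) + Finsupp.single 1 (nn 1)) c) := by
  rw [monomial_eq, Finsupp.prod_pow, Fin.prod_univ_four]
  rw [monomial_eq, Finsupp.prod_pow, Fin.prod_univ_two]
  rw [monomial_eq, Finsupp.prod_pow, Fin.prod_univ_two]
  simp only [map_mul, map_pow, EE_X0, EE_X1, EE_X2, EE_X3, EE_C]
  simp only [Finsupp.add_apply, Finsupp.single_apply]
  norm_num
  ring
end Esec
open MvPolynomial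

section Coeffs
variable {K : Type*} [Field K]

lemma weight4 (nn : Fin 4 →₀ ℕ) :
    (Finsupp.weight (1 : Fin 4 → ℕ)) nn = nn 0 + nn 1 + nn 2 + nn 3 := by
  simp [Finsupp.weight_apply, Finsupp.sum_fintype, Fin.sum_univ_four, mul_comm]


lemma coeff_EE_isHomogeneous {t : ℕ} {f : MvPolynomial (Fin 4) K} (hf : f.IsHomogeneous t)
    (d : Fin 2 →₀ ℕ) : (coeff d (EE K f)).IsHomogeneous (t - (d 0 + d 1)) := by
  conv_lhs => rw [f.as_sum]
  rw [map_sum, coeff_sum, ← mem_homogeneousSubmodule]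
  apply Submodule.sum_mem
  intro nn hnn
  rw [EE_monomial, coeff_monomial, mem_homogeneousSubmodule]
  split_ifs with h
  · apply isHomogeneous_monomial
    have hw := hf (mem_support_iff.mp hnn)
    rw [weight4] at hw
    have h2 : nn 2 = d 0 := by
      have := congrArg (fun g : Fin 2 →₀ ℕ => g 0) h
      simpa using this
    have h3 : nn 3 = d 1 := by
      have := congrArg (fun g : Fin 2 →₀ ℕ => g 1) h
      simpa using this
    have hdeg : (Finsupp.single (0 : Fin 2) (nn 0) + Finsupp.single 1 (nn 1)).degree
        = nn 0 + nn 1 := by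
      rw [Finsupp.degree_eq_weight_one]
      simp [Finsupp.weight_apply, Finsupp.sum_fintype, Fin.sum_univ_two, Finsupp.single_apply,
        mul_comm]
    rw [hdeg]
    omega
  · exact isHomogeneous_zero _ _ _

lemma mem_pow_span_X {B : Type*} [CommRing B] (m : ℕ) (f : MvPolynomial (Fin 2) B)
    (h : ∀ d : Fin 2 →₀ ℕ, d 0 + d 1 < m → coeff d f = 0) :
    f ∈ (Ideal.span {X 0, X 1} : Ideal (MvPolynomial (Fin 2) B)) ^ m := by
  set J : Ideal (MvPolynomial (Fin 2) B) := Ideal.span {X 0, X 1} with hJ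
  rw [f.as_sum]
  apply Submodule.sum_mem
  intro d hd
  have hdm : m ≤ d 0 + d 1 := by
    by_contra hc
    exact mem_support_iff.mp hd (h d (by omega))
  have hX0 : (X 0 : MvPolynomial (Fin 2) B) ∈ J := Ideal.subset_span (by simp)
  have hX1 : (X 1 : MvPolynomial (Fin 2) B) ∈ J := Ideal.subset_span (by simp)
  have hmon : (X 0 ^ (d 0) * X 1 ^ (d 1) : MvPolynomial (Fin 2) B) ∈ J ^ (d 0 + d 1) := by
    rw [pow_add]
    exact Ideal.mul_mem_mul (Ideal.pow_mem_pow hX0 _) (Ideal.pow_mem_pow hX1 _)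
  have : (monomial d) (coeff d f) = C (coeff d f) * (X 0 ^ (d 0) * X 1 ^ (d 1)) := by
    rw [monomial_eq, Finsupp.prod_pow, Fin.prod_univ_two]
  rw [this]
  exact Ideal.pow_le_pow_right hdm (Ideal.mul_mem_left _ _ hmon)

lemma dvd_coeff_of_mem_pow {B : Type*} [CommRing B] (ℓ : B) (m : ℕ)
    (f : MvPolynomial (Fin 2) B)
    (hf : f ∈ (Ideal.span {C ℓ, X 0, X 1} : Ideal (MvPolynomial (Fin 2) B)) ^ m) :
    ∀ d : Fin 2 →₀ ℕ, ℓ ^ (m - (d 0 + d 1)) ∣ coeff d f := by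
  induction hf using Submodule.pow_induction_on_left' with
  | algebraMap r => intro d; simp [Nat.zero_sub]
  | add x y i hx hy ihx ihy =>
      intro d
      rw [coeff_add]
      exact dvd_add (ihx d) (ihy d)
  | mem_mul g hg i x hx ihx =>
      induction hg using Submodule.span_induction with
      | mem g hgmem =>
          rcases hgmem with rfl | rfl | rfl
          · intro d
            rw [coeff_C_mul]
            rcases le_or_gt (d 0 + d 1) i with hk | hk
            · have he : i + 1 - (d 0 + d 1) = (i - (d 0 + d 1)) + 1 := by omega
              rw [he, pow_succ, mul_comm (ℓ ^ _) ℓ]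
              exact mul_dvd_mul_left ℓ (ihx d)
            · rcases Nat.lt_or_ge (d 0 + d 1) (i + 1) with hk2 | hk2
              · have : i + 1 - (d 0 + d 1) = 1 := by omega
                rw [this, pow_one]
                exact Dvd.dvd.mul_right (dvd_refl ℓ) _
              · have : i + 1 - (d 0 + d 1) = 0 := by omega
                rw [this, pow_zero]
                exact one_dvd _
          · intro d
            rw [mul_comm, coeff_mul_X']
            split_ifs with h0
            · have hd0 : 1 ≤ d 0 := by
                rwa [Finsupp.mem_support_iff, ← Nat.pos_iff_ne_zero] at h0
              set v := d - Finsupp.single (0 : Fin 2) 1 with hv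
              have hv0 : v 0 = d 0 - 1 := by simp [hv, Finsupp.single_apply]
              have hv1 : v 1 = d 1 := by simp [hv, Finsupp.single_apply]
              have hle : i + 1 - (d 0 + d 1) ≤ i - (v 0 + v 1) := by omega
              exact (pow_dvd_pow ℓ hle).trans (ihx v)
            · exact dvd_zero _
          · intro d
            rw [mul_comm, coeff_mul_X']
            split_ifs with h0
            · have hd1 : 1 ≤ d 1 := by
                rwa [Finsupp.mem_support_iff, ← Nat.pos_iff_ne_zero] at h0
              set v := d - Finsupp.single (1 : Fin 2) 1 with hv
              have hv0 : v 0 = d 0 := by simp [hv, Finsupp.single_apply]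
              have hv1 : v 1 = d 1 - 1 := by simp [hv, Finsupp.single_apply]
              have hle : i + 1 - (d 0 + d 1) ≤ i - (v 0 + v 1) := by omega
              exact (pow_dvd_pow ℓ hle).trans (ihx v)
            · exact dvd_zero _
      | zero => intro d; rw [zero_mul]; simp
      | add g1 g2 hg1 hg2 ih1 ih2 =>
          intro d
          rw [add_mul, coeff_add]
          exact dvd_add (ih1 d) (ih2 d)
      | smul a g hg ih =>
          intro d
          rw [smul_eq_mul, mul_assoc]
          rw [coeff_mul]
          apply Finset.dvd_sum
          rintro ⟨u, v⟩ huv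
          rw [Finset.HasAntidiagonal.mem_antidiagonal] at huv
          have hv0 : v 0 ≤ d 0 := by
            rw [← huv]; simp
          have hv1 : v 1 ≤ d 1 := by
            rw [← huv]; simp
          have hle : i + 1 - (d 0 + d 1) ≤ i + 1 - (v 0 + v 1) := by omega
          exact ((pow_dvd_pow ℓ hle).trans (ih v)).mul_left _

end Coeffs

section Primes
variable {K : Type*} [Field K]

lemma prime_X0 : Prime (X 0 : MvPolynomial (Fin 2) K) := by
  rw [← MulEquiv.prime_iff (MvPolynomial.finSuccEquiv K 1).toMulEquiv]
  show Prime ((MvPolynomial.finSuccEquiv K 1) (X 0))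
  rw [finSuccEquiv_X_zero]
  exact Polynomial.prime_X

/-- The变量替换 algebra equivalence for an invertible matrix. -/
noncomputable def msubEquiv {n : ℕ} (A : Matrix (Fin n) (Fin n) K) [Invertible A] :
    MvPolynomial (Fin n) K ≃ₐ[K] MvPolynomial (Fin n) K :=
  AlgEquiv.ofAlgHom (msub A) (msub (⅟A))
    (AlgHom.ext fun f => by
      show msub A (msub (⅟A) f) = f
      rw [msub_msub, invOf_mul_self, msub_one])
    (AlgHom.ext fun f => by
      show msub (⅟A) (msub A f) = f
      rw [msub_msub, mul_invOf_self, msub_one])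

lemma prime_lin (a b : K) (hab : (a, b) ≠ (0, 0)) :
    Prime (C b * X 0 - C a * X 1 : MvPolynomial (Fin 2) K) := by
  classical
  set cc : K := if b = 0 then 1 else 0 with hcc
  set dd : K := if b = 0 then 0 else 1 with hdd
  set M : Matrix (Fin 2) (Fin 2) K := !![b, -a; cc, dd] with hM
  have hdet : M.det ≠ 0 := by
    rw [hM, Matrix.det_fin_two_of]
    rcases eq_or_ne b 0 with hb | hb
    · have ha : a ≠ 0 := fun ha0 => hab (by simp [ha0, hb])
      simp [hcc, hdd, hb, ha]
    · simp [hcc, hdd, hb]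
  have : Invertible M := M.invertibleOfIsUnitDet (Ne.isUnit hdet)
  have himg : msubEquiv M (X 0) = (C b * X 0 - C a * X 1 : MvPolynomial (Fin 2) K) := by
    show msub M (X 0) = _
    rw [msub_X, Fin.sum_univ_two]
    have h00 : M 0 0 = b := by simp [hM]
    have h01 : M 0 1 = -a := by simp [hM]
    rw [h00, h01, map_neg, neg_mul, ← sub_eq_add_neg]
  rw [← himg]
  show Prime ((msubEquiv M).toMulEquiv (X 0))
  exact (MulEquiv.prime_iff (msubEquiv M).toMulEquiv).mpr prime_X0

lemma prod_pow_dvd {B : Type*} [CommRing B] [IsDomain B] {ι : Type*} [DecidableEq ι]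
    (S : Finset ι) (p : ι → B) (g : B)
    (hp : ∀ i ∈ S, Prime (p i)) (hnd : ∀ i ∈ S, ∀ j ∈ S, i ≠ j → ¬ p i ∣ p j) (k : ℕ)
    (h : ∀ i ∈ S, p i ^ k ∣ g) : (∏ i ∈ S, p i ^ k) ∣ g := by
  induction S using Finset.induction_on with
  | empty => simp
  | @insert a s ha ih =>
      have hprod : (∏ i ∈ s, p i ^ k) ∣ g :=
        ih (fun i hi => hp i (Finset.mem_insert_of_mem hi))
          (fun i hi j hj hij => hnd i (Finset.mem_insert_of_mem hi) j
            (Finset.mem_insert_of_mem hj) hij)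
          (fun i hi => h i (Finset.mem_insert_of_mem hi))
      obtain ⟨cof, hcof⟩ := hprod
      have hpa : Prime (p a) := hp a (Finset.mem_insert_self a s)
      have hnotdvd : ¬ p a ∣ ∏ i ∈ s, p i ^ k := by
        intro hdvd
        rw [Prime.dvd_finset_prod_iff hpa] at hdvd
        obtain ⟨i, hi, hdvd⟩ := hdvd
        exact hnd a (Finset.mem_insert_self a s) i (Finset.mem_insert_of_mem hi)
          (fun hai => ha (hai ▸ hi)) (hpa.dvd_of_dvd_pow hdvd)
      have hdvd_cof : p a ^ k ∣ cof := by
        apply hpa.pow_dvd_of_dvd_mul_left k hnotdvd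
        rw [← hcof]
        exact h a (Finset.mem_insert_self a s)
      rw [Finset.prod_insert ha, hcof, mul_comm (p a ^ k)]
      exact mul_dvd_mul_left _ hdvd_cof
end Primes

section Core
variable {K : Type*} [Field K]

lemma eq_zero_of_homog_dvd {σ : Type*} {B : Type*} [CommRing B] {g P : MvPolynomial σ B}
    {D N : ℕ} (hg : g.IsHomogeneous D) (hP : P.IsHomogeneous N) (hDN : D < N) (hdvd : P ∣ g) :
    g = 0 := by
  obtain ⟨h, rfl⟩ := hdvd
  have e1 : homogeneousComponent D (P * h) = P * h := by
    rw [homogeneousComponent_of_mem ((mem_homogeneousSubmodule _ _).mpr hg), if_pos rfl]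
  have e2 : P * h = ∑ j ∈ Finset.range (h.totalDegree + 1), P * homogeneousComponent j h := by
    rw [← Finset.mul_sum, sum_homogeneousComponent]
  have e3 : homogeneousComponent D (P * h) = 0 := by
    conv_lhs => rw [e2]
    rw [map_sum]
    apply Finset.sum_eq_zero
    intro j _
    rw [homogeneousComponent_of_mem
      ((mem_homogeneousSubmodule _ _).mpr (hP.mul (homogeneousComponent_isHomogeneous j h))),
      if_neg (by omega)]
  rw [← e1, e3]

theorem core_std (t m s : ℕ) (hmt : m ≤ t) (hs : t - m + 2 ≤ s)
    (a b : Fin s → K) (hab : ∀ i, (a i, b i) ≠ (0, 0))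
    (hdist : ∀ i j, i ≠ j → a i * b j ≠ a j * b i)
    (F : MvPolynomial (Fin 4) K) (hF : F.IsHomogeneous t)
    (hvan : ∀ i, F ∈ (Ideal.span {C (b i) * X 0 - C (a i) * X 1, X 2, X 3} :
      Ideal (MvPolynomial (Fin 4) K)) ^ m) :
    F ∈ (Ideal.span {X 2, X 3} : Ideal (MvPolynomial (Fin 4) K)) ^ m := by
  classical
  set ℓ : Fin s → MvPolynomial (Fin 2) K := fun i => C (b i) * X 0 - C (a i) * X 1 with hℓ
  -- transport the vanishing conditions through EE
  have hEEg1 : ∀ i, EE K (C (b i) * X 0 - C (a i) * X 1) = C (ℓ i) := by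
    intro i
    rw [hℓ]
    simp only [map_sub, map_mul, EE_C, EE_X0, EE_X1]
  have hvan' : ∀ i, ∀ d : Fin 2 →₀ ℕ,
      (ℓ i) ^ (m - (d 0 + d 1)) ∣ coeff d (EE K F) := by
    intro i
    apply dvd_coeff_of_mem_pow
    have h1 : EE K F ∈ Ideal.map (EE K)
        ((Ideal.span {C (b i) * X 0 - C (a i) * X 1, X 2, X 3}) ^ m) :=
      Ideal.mem_map_of_mem _ (hvan i)
    rw [Ideal.map_pow, Ideal.map_span] at h1
    have himg : (EE K) '' {C (b i) * X 0 - C (a i) * X 1, X 2, X 3}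
        = {C (ℓ i), X 0, X 1} := by
      rw [Set.image_insert_eq, Set.image_insert_eq, Set.image_singleton,
        EE_X2, EE_X3, hEEg1 i]
    rwa [himg] at h1
  -- the linear forms are pairwise non-associate primes
  have hℓprime : ∀ i, Prime (ℓ i) := fun i => prime_lin (a i) (b i) (hab i)
  have hℓnd : ∀ i j, i ≠ j → ¬ ℓ i ∣ ℓ j := by
    intro i j hij hdvd
    obtain ⟨u, hu⟩ := hdvd
    have h0 : eval ![a i, b i] (ℓ i) = 0 := by
      simp [hℓ]; ring
    have h1 : eval ![a i, b i] (ℓ j) ≠ 0 := by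
      simp only [hℓ, map_sub, map_mul, eval_C, eval_X]
      simp only [Matrix.cons_val_zero, Matrix.cons_val_one, Matrix.head_cons]
      intro heq
      exact hdist i j hij (by linear_combination heq)
    apply h1
    rw [hu, map_mul, h0, zero_mul]
  have hℓhomog : ∀ i, (ℓ i).IsHomogeneous 1 := by
    intro i
    rw [hℓ]
    apply MvPolynomial.IsHomogeneous.sub
    · simpa using (isHomogeneous_X K (σ := Fin 2) 0).C_mul (b i)
    · simpa using (isHomogeneous_X K (σ := Fin 2) 1).C_mul (a i)
  -- all low-order coefficients vanish
  have hcoeff : ∀ d : Fin 2 →₀ ℕ, d 0 + d 1 < m → coeff d (EE K F) = 0 := by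
    intro d hd
    set k := d 0 + d 1 with hk
    have hglt : t - k < s * (m - k) := by
      have hk1 : 1 ≤ m - k := by omega
      have e2 : (t - m) ≤ (t - m) * (m - k) := Nat.le_mul_of_pos_right _ (by omega)
      have e3 : (t - m + 2) * (m - k) ≤ s * (m - k) := Nat.mul_le_mul_right _ hs
      have e4 : (t - m + 2) * (m - k) = (t - m) * (m - k) + 2 * (m - k) := by ring
      omega
    have hP : (∏ i, (ℓ i) ^ (m - k)).IsHomogeneous (s * (m - k)) := by
      have := MvPolynomial.IsHomogeneous.prod Finset.univ (fun i => (ℓ i) ^ (m - k))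
        (fun _ => m - k) (fun i _ => by simpa using (hℓhomog i).pow (m - k))
      simpa [Finset.sum_const, Finset.card_univ, mul_comm] using this
    have hdvd : (∏ i, (ℓ i) ^ (m - k)) ∣ coeff d (EE K F) :=
      prod_pow_dvd Finset.univ ℓ _ (fun i _ => hℓprime i)
        (fun i _ j _ hij => hℓnd i j hij) (m - k) (fun i _ => hvan' i d)
    exact eq_zero_of_homog_dvd (coeff_EE_isHomogeneous hF d) hP hglt hdvd
  -- conclude
  have hmem : EE K F ∈ (Ideal.span {X 0, X 1} :
      Ideal (MvPolynomial (Fin 2) (MvPolynomial (Fin 2) K))) ^ m :=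
    mem_pow_span_X m _ hcoeff
  have hmap : Ideal.map (EE K) ((Ideal.span {X 2, X 3} :
      Ideal (MvPolynomial (Fin 4) K)) ^ m) = (Ideal.span {X 0, X 1}) ^ m := by
    rw [Ideal.map_pow, Ideal.map_span, Set.image_insert_eq, Set.image_singleton, EE_X2, EE_X3]
  rw [← Ideal.comap_map_of_bijective (EE K) (EE K).bijective
    (I := (Ideal.span {X 2, X 3} : Ideal (MvPolynomial (Fin 4) K)) ^ m)]
  rw [Ideal.mem_comap, hmap]
  exact hmem

end Core

theorem stmt4 (K : Type*) [Field K] [IsAlgClosed K] (t m s : ℕ) (hmt : m ≤ t)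
    (hs : t - m + 2 ≤ s)
    (q r : Fin 4 → K) (hqr : LinearIndependent K ![q, r])
    -- the points `p i = a i • q + b i • r` lie on the line through `q` and `r`;
    -- they are nonzero and pairwise distinct as points of `ℙ^3`
    (a b : Fin s → K) (hab : ∀ i, (a i, b i) ≠ (0, 0))
    (hdist : ∀ i j, i ≠ j → a i * b j ≠ a j * b i)
    (F : MvPolynomial (Fin 4) K) (hF : F.IsHomogeneous t) (hF0 : F ≠ 0)
    (hvan : ∀ i, F ∈ (pointIdealP3 K (a i • q + b i • r)) ^ m) :
    F ∈ (lineIdealP3 K q r) ^ m := by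
  classical
  -- extend q, r to a basis of K⁴
  set W : Submodule K (Fin 4 → K) := Submodule.span K (Set.range ![q, r]) with hWdef
  have hW : Module.finrank K W = 2 := by
    rw [hWdef, finrank_span_eq_card hqr]; simp
  obtain ⟨W', hcompl⟩ := Submodule.exists_isCompl W
  have hW' : Module.finrank K W' = 2 := by
    have h4 := Submodule.finrank_add_eq_of_isCompl hcompl
    have h5 : Module.finrank K (Fin 4 → K) = 4 := by simp
    omega
  set bW : Module.Basis (Fin 2) K W := Module.Basis.span hqr with hbW
  set bW' : Module.Basis (Fin 2) K W' := (Module.finBasis K W').reindex (finCongr hW') with hbW'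
  set bsum := bW.prod bW' with hbsum
  set bmap := bsum.map (Submodule.prodEquivOfIsCompl _ W' hcompl) with hbmap
  set b4 : Module.Basis (Fin 4) K (Fin 4 → K) := bmap.reindex finSumFinEquiv with hb4
  have hb40 : b4 0 = q := by
    have h0 : finSumFinEquiv.symm (0 : Fin (2 + 2)) = Sum.inl (0 : Fin 2) := by
      rw [show (0 : Fin (2 + 2)) = Fin.castAdd 2 (0 : Fin 2) from rfl,
        finSumFinEquiv_symm_apply_castAdd]
    rw [hb4, Module.Basis.reindex_apply, h0, hbmap, Module.Basis.map_apply]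
    have h1 : bsum (Sum.inl (0 : Fin 2)) = (bW 0, 0) := by
      rw [hbsum, Module.Basis.prod_apply]
      simp only [Sum.elim_inl, Function.comp_apply, LinearMap.coe_inl]
    rw [h1, Submodule.coe_prodEquivOfIsCompl']
    simp only [ZeroMemClass.coe_zero, add_zero]
    exact congrArg Subtype.val (Module.Basis.span_apply hqr 0)
  have hb41 : b4 1 = r := by
    have h0 : finSumFinEquiv.symm (1 : Fin (2 + 2)) = Sum.inl (1 : Fin 2) := by
      rw [show (1 : Fin (2 + 2)) = Fin.castAdd 2 (1 : Fin 2) from rfl,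
        finSumFinEquiv_symm_apply_castAdd]
    rw [hb4, Module.Basis.reindex_apply, h0, hbmap, Module.Basis.map_apply]
    have h1 : bsum (Sum.inl (1 : Fin 2)) = (bW 1, 0) := by
      rw [hbsum, Module.Basis.prod_apply]
      simp only [Sum.elim_inl, Function.comp_apply, LinearMap.coe_inl]
    rw [h1, Submodule.coe_prodEquivOfIsCompl']
    simp only [ZeroMemClass.coe_zero, add_zero]
    exact congrArg Subtype.val (Module.Basis.span_apply hqr 1)
  -- the change-of-coordinates matrix
  set Pm : Matrix (Fin 4) (Fin 4) K := (Pi.basisFun K (Fin 4)).toMatrix ⇑b4 with hPm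
  have hPinv : Invertible Pm := (Pi.basisFun K (Fin 4)).invertibleToMatrix b4
  have hPmul : ∀ x : Fin 4 → K, Pm.mulVec x = ∑ k, x k • b4 k := by
    intro x; funext j
    simp [hPm, Matrix.mulVec, dotProduct, Module.Basis.toMatrix, Pi.basisFun_repr,
      Finset.sum_apply, mul_comm]
  have hq : Pm.mulVec (Pi.single (0 : Fin 4) 1) = q := by
    rw [hPmul, Fin.sum_univ_four]
    simp [Pi.single_apply, hb40]
  have hr : Pm.mulVec (Pi.single (1 : Fin 4) 1) = r := by
    rw [hPmul, Fin.sum_univ_four]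
    simp [Pi.single_apply, hb41]
  set c : Fin s → (Fin 4 → K) := fun i => ![a i, b i, 0, 0] with hc
  have hPc : ∀ i, Pm.mulVec (c i) = a i • q + b i • r := by
    intro i
    rw [hPmul, Fin.sum_univ_four]
    have e0 : c i 0 = a i := rfl
    have e1 : c i 1 = b i := rfl
    have e2 : c i 2 = 0 := rfl
    have e3 : c i 3 = 0 := rfl
    rw [e0, e1, e2, e3, hb40, hb41, zero_smul, zero_smul, add_zero, add_zero]
  -- move to standard coordinates
  set G := msub Pm F with hG
  have hGhom : G.IsHomogeneous t := isHomogeneous_msub Pm hF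
  have hGvan : ∀ i, G ∈ (Ideal.span {C (b i) * X 0 - C (a i) * X 1, X 2, X 3} :
      Ideal (MvPolynomial (Fin 4) K)) ^ m := by
    intro i
    have h1 : G ∈ (Ideal.map (msub Pm) (pointIdealP3 K (a i • q + b i • r))) ^ m := by
      rw [← Ideal.map_pow]
      exact Ideal.mem_map_of_mem _ (hvan i)
    have h2 : Ideal.map (msub Pm) (pointIdealP3 K (a i • q + b i • r))
        ≤ pointIdealP3 K (c i) := by
      rw [pointIdealP3, Ideal.map_span, Ideal.span_le]
      rintro x ⟨l, ⟨hl1, hl2⟩, rfl⟩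
      apply Ideal.subset_span
      refine ⟨isHomogeneous_msub _ hl1, ?_⟩
      rw [eval_msub, hPc i, hl2]
    have h3 : pointIdealP3 K (c i)
        ≤ Ideal.span {C (b i) * X 0 - C (a i) * X 1, X 2, X 3} :=
      pointIdeal_le (a i) (b i) (hab i) (c i) rfl rfl rfl rfl
    exact Ideal.pow_right_mono (h2.trans h3) m h1
  have hGline : G ∈ (Ideal.span {X 2, X 3} : Ideal (MvPolynomial (Fin 4) K)) ^ m :=
    core_std t m s hmt hs a b hab hdist G hGhom hGvan
  -- move back
  have hFG : F = msub (⅟Pm) G := by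
    rw [hG, msub_msub, mul_invOf_self, msub_one]
  have hqinv : (⅟Pm).mulVec q = Pi.single (0 : Fin 4) 1 := by
    rw [← hq, Matrix.mulVec_mulVec, invOf_mul_self, Matrix.one_mulVec]
  have hrinv : (⅟Pm).mulVec r = Pi.single (1 : Fin 4) 1 := by
    rw [← hr, Matrix.mulVec_mulVec, invOf_mul_self, Matrix.one_mulVec]
  have h4 : msub (⅟Pm) G ∈ Ideal.map (msub (⅟Pm))
      ((Ideal.span {X 2, X 3} : Ideal (MvPolynomial (Fin 4) K)) ^ m) :=
    Ideal.mem_map_of_mem _ hGline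
  rw [Ideal.map_pow] at h4
  have h5 : Ideal.map (msub (⅟Pm)) (Ideal.span {X 2, X 3} :
      Ideal (MvPolynomial (Fin 4) K)) ≤ lineIdealP3 K q r := by
    rw [Ideal.map_span, Ideal.span_le]
    rintro x ⟨l, hl, rfl⟩
    apply Ideal.subset_span
    rcases hl with rfl | rfl
    · exact ⟨isHomogeneous_msub _ (isHomogeneous_X K 2),
        by rw [eval_msub, hqinv, eval_X]; rfl,
        by rw [eval_msub, hrinv, eval_X]; rfl⟩
    · exact ⟨isHomogeneous_msub _ (isHomogeneous_X K 3),
        by rw [eval_msub, hqinv, eval_X]; rfl,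
        by rw [eval_msub, hrinv, eval_X]; rfl⟩
  rw [hFG]
  exact Ideal.pow_right_mono h5 m h4
end
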